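/- For every n ≥ 2, the standard Gaussian measure γₙ on ℝⁿ is neither submodular nor supermodular on symmetric convex bodies: there exist symmetric convex bodies A, B, C with γₙ(A + B + C) + γₙ(A) > γₙ(A + B) + γₙ(A + C), and there exist symmetric convex bodies A', B', C' with γₙ(A' + B' + C') + γₙ(A') < γₙ(A' + B') + γₙ(A' + C'). -/

import Mathlib

open Pointwise MeasureTheory Set

-- derivative of h t = t^(n-1) * exp(-t^2/2)
lemma gaussH_hasDerivAt (n : ℕ) (hn : 2 ≤ n) (t : ℝ) :
    HasDerivAt (fun t : ℝ => t ^ (n-1) * Real.exp (-t^2/2))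
      (Real.exp (-t^2/2) * t^(n-2) * (((n:ℝ)-1) - t^2)) t := by
  have h2 : HasDerivAt (fun t : ℝ => -t^2/2) (-t) t := by
    have := ((hasDerivAt_pow 2 t).neg).div_const 2
    refine this.congr_deriv ?_
    push_cast; ring
  have h1 : HasDerivAt (fun t : ℝ => t ^ (n-1)) (((n-1 : ℕ) : ℝ) * t ^ (n-1-1)) t :=
    hasDerivAt_pow _ _
  have H := h1.mul h2.exp
  refine H.congr_deriv ?_
  have e1 : n - 1 - 1 = n - 2 := by omega
  have e2 : n - 1 = (n - 2) + 1 := by omega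
  have e3 : ((n-1 : ℕ) : ℝ) = (n:ℝ) - 1 := by
    have : (1:ℕ) ≤ n := by omega
    push_cast [Nat.cast_sub this]; ring
  rw [e1, e3, e2, pow_succ]
  ring

lemma gaussH_strictMonoOn (n : ℕ) (hn : 2 ≤ n) :
    StrictMonoOn (fun t : ℝ => t ^ (n-1) * Real.exp (-t^2/2))
      (Icc 0 (Real.sqrt ((n:ℝ)-1))) := by
  apply strictMonoOn_of_deriv_pos (convex_Icc _ _)
  · exact ((continuous_pow _).mul (Real.continuous_exp.comp (by continuity))).continuousOn
  · intro x hx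
    rw [interior_Icc] at hx
    rw [(gaussH_hasDerivAt n hn x).deriv]
    have hx0 : 0 < x := hx.1
    have hx2 : x ^ 2 < (n:ℝ) - 1 := (Real.lt_sqrt hx0.le).1 hx.2
    exact mul_pos (mul_pos (Real.exp_pos _) (pow_pos hx0 _)) (by linarith)

lemma gaussH_strictAntiOn (n : ℕ) (hn : 2 ≤ n) :
    StrictAntiOn (fun t : ℝ => t ^ (n-1) * Real.exp (-t^2/2))
      (Ici (Real.sqrt ((n:ℝ)-1))) := by
  apply strictAntiOn_of_deriv_neg (convex_Ici _)
  · exact ((continuous_pow _).mul (Real.continuous_exp.comp (by continuity))).continuousOn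
  · intro x hx
    rw [interior_Ici] at hx
    have hs : 0 < Real.sqrt ((n:ℝ)-1) := Real.sqrt_pos.2 (by
      have : (2:ℝ) ≤ n := by exact_mod_cast hn
      linarith)
    have hx0 : 0 < x := hs.trans hx
    rw [(gaussH_hasDerivAt n hn x).deriv]
    have hx2 : (n:ℝ) - 1 < x ^ 2 := (Real.sqrt_lt' hx0).1 hx
    exact mul_neg_of_pos_of_neg (mul_pos (Real.exp_pos _) (pow_pos hx0 _)) (by linarith)

lemma gauss_ball (n : ℕ) (hn : 2 ≤ n) {r : ℝ} (hr : 0 < r) :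
    (volume.withDensity (fun x : EuclideanSpace ℝ (Fin n) =>
        ENNReal.ofReal ((2 * Real.pi) ^ (-(n:ℝ)/2) * Real.exp (-‖x‖^2/2))))
      (Metric.closedBall 0 r)
    = ENNReal.ofReal (((n : ℝ) * (volume (Metric.ball (0 : EuclideanSpace ℝ (Fin n)) 1)).toReal
        * (2*Real.pi) ^ (-(n:ℝ)/2)) * ∫ t in (0:ℝ)..r, t^(n-1) * Real.exp (-t^2/2)) := by
  haveI : Nonempty (Fin n) := ⟨⟨0, by omega⟩⟩
  haveI : Nontrivial (EuclideanSpace ℝ (Fin n)) := inferInstance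
  set c : ℝ := (2*Real.pi) ^ (-(n:ℝ)/2) with hc
  have hcpos : 0 < c := Real.rpow_pos_of_pos (by positivity) _
  set g : EuclideanSpace ℝ (Fin n) → ℝ := fun x => c * Real.exp (-‖x‖^2/2) with hg
  have hgc : Continuous g := by
    apply continuous_const.mul
    exact Real.continuous_exp.comp (by continuity)
  rw [withDensity_apply _ (measurableSet_closedBall)]
  have h1 : ∫⁻ x in Metric.closedBall 0 r, ENNReal.ofReal (g x)
      = ENNReal.ofReal (∫ x in Metric.closedBall 0 r, g x) := by
    rw [← ofReal_integral_eq_lintegral_ofReal]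
    · exact hgc.continuousOn.integrableOn_compact (isCompact_closedBall _ _)
    · filter_upwards with x
      positivity
  rw [h1]
  congr 1
  set f₀ : ℝ → ℝ := (Iic r).indicator (fun t => c * Real.exp (-t^2/2)) with hf₀
  have h2 : ∫ x in Metric.closedBall (0 : EuclideanSpace ℝ (Fin n)) r, g x
      = ∫ x : EuclideanSpace ℝ (Fin n), f₀ ‖x‖ := by
    rw [← MeasureTheory.integral_indicator measurableSet_closedBall]
    congr 1
    funext x
    by_cases hx : ‖x‖ ≤ r
    · rw [Set.indicator_of_mem (by simpa [mem_closedBall_zero_iff] using hx),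
        hf₀, Set.indicator_of_mem (by simpa using hx)]
    · rw [Set.indicator_of_notMem (by simpa [mem_closedBall_zero_iff] using hx),
        hf₀, Set.indicator_of_notMem (by simpa using hx)]
  rw [h2, integral_fun_norm_addHaar volume f₀, finrank_euclideanSpace_fin]
  have h3 : ∀ y : ℝ, y ^ (n-1) • f₀ y
      = (Iic r).indicator (fun y => y^(n-1) * (c * Real.exp (-y^2/2))) y := by
    intro y
    by_cases hy : y ≤ r
    · rw [hf₀, Set.indicator_of_mem (by simpa using hy),
        Set.indicator_of_mem (by simpa using hy), smul_eq_mul]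
    · rw [hf₀, Set.indicator_of_notMem (by simpa using hy),
        Set.indicator_of_notMem (by simpa using hy), smul_zero]
  rw [show (fun y : ℝ => y ^ (n-1) • f₀ y) = fun y =>
      (Iic r).indicator (fun y => y^(n-1) * (c * Real.exp (-y^2/2))) y from funext h3]
  rw [MeasureTheory.setIntegral_indicator measurableSet_Iic, Set.Ioi_inter_Iic,
    ← intervalIntegral.integral_of_le hr.le,
    show (fun y : ℝ => y^(n-1) * (c * Real.exp (-y^2/2)))
      = fun y => c * (y^(n-1) * Real.exp (-y^2/2)) from funext fun y => by ring,
    intervalIntegral.integral_const_mul, nsmul_eq_mul, smul_eq_mul]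
  rw [measureReal_def]
  ring

lemma gaussH_cont (n : ℕ) : Continuous (fun t : ℝ => t ^ (n-1) * Real.exp (-t^2/2)) :=
  (continuous_pow _).mul (Real.continuous_exp.comp (by continuity))

lemma gaussH_L1 (n : ℕ) {r : ℝ} (hr : 0 < r)
    (hmono : ∀ t ∈ Icc r (2*r),
      t ^ (n-1) * Real.exp (-t^2/2) < (t+r) ^ (n-1) * Real.exp (-(t+r)^2/2)) :
    (∫ t in (0:ℝ)..(r+r), t^(n-1) * Real.exp (-t^2/2))
      + (∫ t in (0:ℝ)..(r+r), t^(n-1) * Real.exp (-t^2/2))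
    < (∫ t in (0:ℝ)..(r+r+r), t^(n-1) * Real.exp (-t^2/2))
      + (∫ t in (0:ℝ)..r, t^(n-1) * Real.exp (-t^2/2)) := by
  set h : ℝ → ℝ := fun t => t ^ (n-1) * Real.exp (-t^2/2) with hh
  have hic : ∀ a b : ℝ, IntervalIntegrable h volume a b :=
    fun a b => (gaussH_cont n).intervalIntegrable a b
  have hadd1 : (∫ t in (0:ℝ)..r, h t) + (∫ t in r..(r+r), h t) = ∫ t in (0:ℝ)..(r+r), h t :=
    intervalIntegral.integral_add_adjacent_intervals (hic _ _) (hic _ _)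
  have hadd2 : (∫ t in (0:ℝ)..(r+r), h t) + (∫ t in (r+r)..(r+r+r), h t)
      = ∫ t in (0:ℝ)..(r+r+r), h t :=
    intervalIntegral.integral_add_adjacent_intervals (hic _ _) (hic _ _)
  have hcomp : (∫ t in r..(r+r), h (t+r)) = ∫ t in (r+r)..(r+r+r), h t :=
    intervalIntegral.integral_comp_add_right h r
  have hlt : (∫ t in r..(r+r), h t) < ∫ t in r..(r+r), h (t+r) := by
    apply intervalIntegral.integral_lt_integral_of_continuousOn_of_le_of_exists_lt
      (by linarith) (gaussH_cont n).continuousOn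
      ((gaussH_cont n).comp (by continuity)).continuousOn
    · intro x hx
      exact (hmono x ⟨hx.1.le, by linarith [hx.2]⟩).le
    · exact ⟨r, ⟨le_refl r, by linarith⟩, hmono r ⟨le_refl r, by linarith⟩⟩
  have h2r : (2:ℝ)*r = r + r := by ring
  rw [h2r] at hmono
  linarith [hcomp, hadd1, hadd2, hlt]

lemma gaussH_L2 (n : ℕ) {r : ℝ} (hr : 0 < r)
    (hmono : ∀ t ∈ Icc r (2*r),
      (t+r) ^ (n-1) * Real.exp (-(t+r)^2/2) < t ^ (n-1) * Real.exp (-t^2/2)) :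
    (∫ t in (0:ℝ)..(r+r+r), t^(n-1) * Real.exp (-t^2/2))
      + (∫ t in (0:ℝ)..r, t^(n-1) * Real.exp (-t^2/2))
    < (∫ t in (0:ℝ)..(r+r), t^(n-1) * Real.exp (-t^2/2))
      + (∫ t in (0:ℝ)..(r+r), t^(n-1) * Real.exp (-t^2/2)) := by
  set h : ℝ → ℝ := fun t => t ^ (n-1) * Real.exp (-t^2/2) with hh
  have hic : ∀ a b : ℝ, IntervalIntegrable h volume a b :=
    fun a b => (gaussH_cont n).intervalIntegrable a b
  have hadd1 : (∫ t in (0:ℝ)..r, h t) + (∫ t in r..(r+r), h t) = ∫ t in (0:ℝ)..(r+r), h t :=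
    intervalIntegral.integral_add_adjacent_intervals (hic _ _) (hic _ _)
  have hadd2 : (∫ t in (0:ℝ)..(r+r), h t) + (∫ t in (r+r)..(r+r+r), h t)
      = ∫ t in (0:ℝ)..(r+r+r), h t :=
    intervalIntegral.integral_add_adjacent_intervals (hic _ _) (hic _ _)
  have hcomp : (∫ t in r..(r+r), h (t+r)) = ∫ t in (r+r)..(r+r+r), h t :=
    intervalIntegral.integral_comp_add_right h r
  have hlt : (∫ t in r..(r+r), h (t+r)) < ∫ t in r..(r+r), h t := by
    apply intervalIntegral.integral_lt_integral_of_continuousOn_of_le_of_exists_lt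
      (by linarith) ((gaussH_cont n).comp (by continuity)).continuousOn
      (gaussH_cont n).continuousOn
    · intro x hx
      exact (hmono x ⟨hx.1.le, by linarith [hx.2]⟩).le
    · exact ⟨r, ⟨le_refl r, by linarith⟩, hmono r ⟨le_refl r, by linarith⟩⟩
  linarith [hcomp, hadd1, hadd2, hlt]

theorem stmt5 {n : ℕ} (hn : 2 ≤ n) (γ : Measure (EuclideanSpace ℝ (Fin n)))
    (hγ : γ = volume.withDensity
      (fun x => ENNReal.ofReal ((2 * Real.pi) ^ (-(n:ℝ)/2) * Real.exp (-‖x‖^2/2)))) :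
    (∃ A B C : Set (EuclideanSpace ℝ (Fin n)),
      (IsCompact A ∧ Convex ℝ A ∧ (interior A).Nonempty ∧ A = -A) ∧
      (IsCompact B ∧ Convex ℝ B ∧ (interior B).Nonempty ∧ B = -B) ∧
      (IsCompact C ∧ Convex ℝ C ∧ (interior C).Nonempty ∧ C = -C) ∧
      γ (A + B) + γ (A + C) < γ (A + B + C) + γ A) ∧
    (∃ A B C : Set (EuclideanSpace ℝ (Fin n)),
      (IsCompact A ∧ Convex ℝ A ∧ (interior A).Nonempty ∧ A = -A) ∧
      (IsCompact B ∧ Convex ℝ B ∧ (interior B).Nonempty ∧ B = -B) ∧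
      (IsCompact C ∧ Convex ℝ C ∧ (interior C).Nonempty ∧ C = -C) ∧
      γ (A + B + C) + γ A < γ (A + B) + γ (A + C)) := by
  subst hγ
  have h2n : (2:ℝ) ≤ n := by exact_mod_cast hn
  have props : ∀ r : ℝ, 0 < r →
      IsCompact (Metric.closedBall (0 : EuclideanSpace ℝ (Fin n)) r) ∧
      Convex ℝ (Metric.closedBall (0 : EuclideanSpace ℝ (Fin n)) r) ∧
      (interior (Metric.closedBall (0 : EuclideanSpace ℝ (Fin n)) r)).Nonempty ∧
      Metric.closedBall (0 : EuclideanSpace ℝ (Fin n)) r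
        = -Metric.closedBall (0 : EuclideanSpace ℝ (Fin n)) r := by
    intro r hr
    refine ⟨isCompact_closedBall _ _, convex_closedBall _ _, ?_, ?_⟩
    · rw [interior_closedBall _ hr.ne']
      exact Metric.nonempty_ball.2 hr
    · rw [neg_closedBall, neg_zero]
  have hsum : ∀ r s : ℝ, 0 < r → 0 < s →
      Metric.closedBall (0 : EuclideanSpace ℝ (Fin n)) r
        + Metric.closedBall (0 : EuclideanSpace ℝ (Fin n)) s
      = Metric.closedBall (0 : EuclideanSpace ℝ (Fin n)) (r+s) := by
    intro r s hr hs
    rw [closedBall_add_closedBall hr.le hs.le, add_zero]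
  have hG : ∀ s : ℝ, 0 ≤ s → 0 ≤ ∫ t in (0:ℝ)..s, t^(n-1) * Real.exp (-t^2/2) :=
    fun s hs => intervalIntegral.integral_nonneg hs
      (fun t ht => mul_nonneg (pow_nonneg ht.1 _) (Real.exp_pos _).le)
  have hK : 0 < (n : ℝ) * (volume (Metric.ball (0 : EuclideanSpace ℝ (Fin n)) 1)).toReal
      * (2*Real.pi) ^ (-(n:ℝ)/2) := by
    have h1 : (0:ℝ) < n := by linarith
    have h2 : 0 < (volume (Metric.ball (0 : EuclideanSpace ℝ (Fin n)) 1)).toReal :=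
      ENNReal.toReal_pos (Metric.measure_ball_pos volume 0 one_pos).ne'
        (measure_ball_lt_top).ne
    have h3 : (0:ℝ) < (2*Real.pi) ^ (-(n:ℝ)/2) := Real.rpow_pos_of_pos (by positivity) _
    positivity
  set K : ℝ := (n : ℝ) * (volume (Metric.ball (0 : EuclideanSpace ℝ (Fin n)) 1)).toReal
      * (2*Real.pi) ^ (-(n:ℝ)/2) with hKdef
  have rw4 : ∀ r : ℝ, 0 < r →
      ((volume.withDensity (fun x : EuclideanSpace ℝ (Fin n) =>
          ENNReal.ofReal ((2 * Real.pi) ^ (-(n:ℝ)/2) * Real.exp (-‖x‖^2/2))))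
        (Metric.closedBall 0 r + Metric.closedBall 0 r)
      = ENNReal.ofReal (K * ∫ t in (0:ℝ)..(r+r), t^(n-1) * Real.exp (-t^2/2)))
      ∧ ((volume.withDensity (fun x : EuclideanSpace ℝ (Fin n) =>
          ENNReal.ofReal ((2 * Real.pi) ^ (-(n:ℝ)/2) * Real.exp (-‖x‖^2/2))))
        (Metric.closedBall 0 r + Metric.closedBall 0 r + Metric.closedBall 0 r)
      = ENNReal.ofReal (K * ∫ t in (0:ℝ)..(r+r+r), t^(n-1) * Real.exp (-t^2/2)))
      ∧ ((volume.withDensity (fun x : EuclideanSpace ℝ (Fin n) =>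
          ENNReal.ofReal ((2 * Real.pi) ^ (-(n:ℝ)/2) * Real.exp (-‖x‖^2/2))))
        (Metric.closedBall 0 r)
      = ENNReal.ofReal (K * ∫ t in (0:ℝ)..r, t^(n-1) * Real.exp (-t^2/2))) := by
    intro r hr
    refine ⟨?_, ?_, ?_⟩
    · rw [hsum r r hr hr, gauss_ball n hn (show (0:ℝ) < r+r by linarith)]
    · rw [hsum r r hr hr, hsum (r+r) r (by linarith) hr,
        gauss_ball n hn (show (0:ℝ) < r+r+r by linarith)]
    · rw [gauss_ball n hn hr]
  have cmp : ∀ a b c d : ℝ, 0 ≤ a → 0 ≤ b → 0 ≤ c → 0 ≤ d → a + b < c + d →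
      ENNReal.ofReal (K * a) + ENNReal.ofReal (K * b)
        < ENNReal.ofReal (K * c) + ENNReal.ofReal (K * d) := by
    intro a b c d ha hb hc hd h
    rw [← ENNReal.ofReal_add (by positivity) (by positivity),
      ← ENNReal.ofReal_add (by positivity) (by positivity),
      ENNReal.ofReal_lt_ofReal_iff_of_nonneg (by positivity)]
    have := mul_lt_mul_of_pos_left h hK
    rw [mul_add, mul_add] at this
    exact this
  constructor
  · -- convex regime: r = 1/4
    have hsq : (1:ℝ) ≤ Real.sqrt ((n:ℝ)-1) := by
      have := Real.sqrt_le_sqrt (show (1:ℝ) ≤ (n:ℝ)-1 by linarith)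
      rwa [Real.sqrt_one] at this
    have hr : (0:ℝ) < 1/4 := by norm_num
    obtain ⟨e1, e2, e3⟩ := rw4 (1/4) hr
    refine ⟨_, _, _, props _ hr, props _ hr, props _ hr, ?_⟩
    rw [e1, e2, e3]
    refine cmp _ _ _ _ (hG _ (by norm_num)) (hG _ (by norm_num))
      (hG _ (by norm_num)) (hG _ (by norm_num)) ?_
    apply gaussH_L1 n hr
    intro t ht
    exact gaussH_strictMonoOn n hn
      ⟨by linarith [ht.1], by linarith [ht.2]⟩
      ⟨by linarith [ht.1], by linarith [ht.2]⟩ (by linarith)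
  · -- concave regime: r = n
    have hsn : Real.sqrt ((n:ℝ)-1) ≤ (n:ℝ) := by
      have h1 : ((n:ℝ)-1) ≤ (n:ℝ)^2 := by nlinarith
      calc Real.sqrt ((n:ℝ)-1) ≤ Real.sqrt ((n:ℝ)^2) := Real.sqrt_le_sqrt h1
        _ = (n:ℝ) := Real.sqrt_sq (by linarith)
    have hr : (0:ℝ) < n := by linarith
    obtain ⟨e1, e2, e3⟩ := rw4 (n:ℝ) hr
    refine ⟨_, _, _, props _ hr, props _ hr, props _ hr, ?_⟩
    rw [e1, e2, e3]
    refine cmp _ _ _ _ (hG _ (by linarith)) (hG _ (by linarith))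
      (hG _ (by linarith)) (hG _ (by linarith)) ?_
    apply gaussH_L2 n hr
    intro t ht
    exact gaussH_strictAntiOn n hn
      (mem_Ici.2 (by linarith [ht.1]))
      (mem_Ici.2 (by linarith [ht.1])) (by linarith)
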